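/- Let Γ be a finite connected graph with vertex set V, with all vertex degrees at most k, let 1 ≤ p < ∞, and let F : V → ℓ_p(ℕ) be an injective 1-Lipschitz map (‖F(x) − F(y)‖_p ≤ d(x,y) for all x,y). Then there exists w ∈ ℓ_p(ℕ) such that λ₁^{(p)}(Γ) · Σ_{x∈V} ‖F(x) − w‖_p^p ≤ k·|V|. -/

import Mathlib

noncomputable section
open scoped ENNReal

/-- The simple graph underlying a finite graph with symmetric edge multiplicities `ω`:
distinct vertices are adjacent iff they are joined by at least one edge. -/
def multGraph {V : Type*} (ω : V → V → ℕ) : SimpleGraph V where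
  Adj x y := x ≠ y ∧ 1 ≤ ω x y ∧ 1 ≤ ω y x
  symm := by
    constructor
    rintro x y ⟨h1, h2, h3⟩
    exact ⟨h1.symm, h3, h2⟩
  loopless := ⟨fun x h => h.1 rfl⟩

/-- The shortest-path metric of the graph with edge multiplicities `ω`, as a real number. -/
def multDist {V : Type*} (ω : V → V → ℕ) (x y : V) : ℝ :=
  ((multGraph ω).dist x y : ℝ)

/-- The first positive eigenvalue `λ₁^{(p)}` of the discrete `p`-Laplacian of the finite graph
with edge multiplicities `ω`, defined via the variational characterization (3). -/
def lambdaOne {V : Type*} [Fintype V] (ω : V → V → ℕ) (p : ℝ) : ℝ :=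
  sInf {r : ℝ | ∃ f : V → ℝ, (¬ ∀ x y : V, f x = f y) ∧
    r = (∑ x : V, ∑ y : V, |f x - f y| ^ p * (ω x y : ℝ)) /
        (⨅ α : ℝ, ∑ x : V, |f x - α| ^ p)}


private lemma exists_sum_abs_rpow_min {V : Type*} [Fintype V] [Nonempty V]
    (f : V → ℝ) (p : ℝ) (hp : 0 ≤ p) :
    ∃ α : ℝ, ∀ β : ℝ, (∑ x : V, |f x - α| ^ p) ≤ ∑ x : V, |f x - β| ^ p := by
  set g : ℝ → ℝ := fun β => ∑ x : V, |f x - β| ^ p with hg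
  have hcont : Continuous g := by
    apply continuous_finset_sum
    intro x _
    exact ((continuous_const.sub continuous_id).abs).rpow_const (fun β => Or.inr hp)
  set m : ℝ := Finset.univ.inf' Finset.univ_nonempty f with hm
  set M : ℝ := Finset.univ.sup' Finset.univ_nonempty f with hM
  have hmM : m ≤ M := by
    obtain ⟨x⟩ := (inferInstance : Nonempty V)
    exact le_trans (Finset.inf'_le _ (Finset.mem_univ x)) (Finset.le_sup' _ (Finset.mem_univ x))
  obtain ⟨α, hαmem, hαmin⟩ :=
    isCompact_Icc.exists_isMinOn (Set.nonempty_Icc.mpr hmM) hcont.continuousOn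
  refine ⟨α, fun β => ?_⟩
  set β' : ℝ := max m (min M β) with hβ'
  have hβ'mem : β' ∈ Set.Icc m M := ⟨le_max_left _ _, max_le hmM (min_le_left _ _)⟩
  have h1 : g β' ≤ g β := by
    apply Finset.sum_le_sum
    intro x _
    have hx1 : m ≤ f x := Finset.inf'_le _ (Finset.mem_univ x)
    have hx2 : f x ≤ M := Finset.le_sup' _ (Finset.mem_univ x)
    apply Real.rpow_le_rpow (abs_nonneg _) _ hp
    rcases le_total β m with h | h
    · have hb : β' = m := by
        rw [hβ', min_eq_right (h.trans hmM), max_eq_left h]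
      rw [hb, abs_of_nonneg (by linarith), abs_of_nonneg (by linarith)]
      linarith
    rcases le_total β M with h2 | h2
    · have hb : β' = β := by rw [hβ', min_eq_right h2, max_eq_right h]
      rw [hb]
    · have hb : β' = M := by rw [hβ', min_eq_left h2, max_eq_right hmM]
      rw [hb, abs_of_nonpos (by linarith), abs_of_nonpos (by linarith)]
      linarith
  exact le_trans (isMinOn_iff.mp hαmin β' hβ'mem) h1

/-- if `F : V → ℓ_p(ℕ)` is injective and `1`-Lipschitz on a finite connected graph
with degrees at most `k`, then there is `w ∈ ℓ_p(ℕ)` with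
`λ₁^{(p)}(Γ) · Σ_x ‖F x − w‖^p ≤ k·|V|`. -/
theorem statement_2 {V : Type*} [Fintype V] (ω : V → V → ℕ)
    (hsymm : ∀ x y : V, ω x y = ω y x)
    (hconn : (multGraph ω).Connected)
    (k : ℕ) (hdeg : ∀ x : V, (∑ y : V, ω x y) ≤ k)
    (p : ℝ) (hp : 1 ≤ p)
    (F : V → lp (fun _ : ℕ => ℝ) (ENNReal.ofReal p))
    (hinj : Function.Injective F)
    (hlip : ∀ x y : V, ‖F x - F y‖ ≤ multDist ω x y) :
    ∃ w : lp (fun _ : ℕ => ℝ) (ENNReal.ofReal p),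
      lambdaOne ω p * ∑ x : V, ‖F x - w‖ ^ p ≤ (k : ℝ) * (Fintype.card V : ℝ) := by
  classical
  have hV : Nonempty V := hconn.nonempty
  haveI hfact : Fact (1 ≤ ENNReal.ofReal p) := ⟨ENNReal.one_le_ofReal.mpr hp⟩
  have h0p : 0 < p := lt_of_lt_of_le one_pos hp
  have htop : (ENNReal.ofReal p).toReal = p := ENNReal.toReal_ofReal h0p.le
  have hptr : 0 < (ENNReal.ofReal p).toReal := by rw [htop]; exact h0p
  set x₀ : V := Classical.arbitrary V with hx₀
  set f : ℕ → V → ℝ := fun i x => F x i with hf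
  have hsub : ∀ x y : V, ∀ i, ‖(F x - F y : lp _ (ENNReal.ofReal p)) i‖ = |f i x - f i y| := by
    intro x y i
    simp [hf, Real.norm_eq_abs]
  have hFs : ∀ x y : V, Summable (fun i => |f i x - f i y| ^ p) := by
    intro x y
    have h := (lp.memℓp (F x - F y)).summable hptr
    rw [htop] at h
    exact h.congr fun i => by rw [hsub x y i]
  have hmin : ∀ i : ℕ, ∃ α : ℝ, ∀ β : ℝ,
      (∑ x : V, |f i x - α| ^ p) ≤ ∑ x : V, |f i x - β| ^ p :=
    fun i => exists_sum_abs_rpow_min (f i) p h0p.le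
  choose α hα using hmin
  set S : ℕ → ℝ := fun i => ∑ x : V, |f i x - α i| ^ p with hSdef
  have hSnonneg : ∀ i, 0 ≤ S i := fun i =>
    Finset.sum_nonneg fun x _ => Real.rpow_nonneg (abs_nonneg _) _
  have hT : Summable (fun i => ∑ x : V, |f i x - f i x₀| ^ p) :=
    summable_sum fun x _ => hFs x x₀
  have hSsum : Summable S :=
    Summable.of_nonneg_of_le hSnonneg (fun i => hα i (f i x₀)) hT
  set u : ℕ → ℝ := fun i => α i - f i x₀ with hu
  have humem : Memℓp u (ENNReal.ofReal p) := by
    apply memℓp_gen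
    rw [htop]
    apply Summable.of_nonneg_of_le (fun i => Real.rpow_nonneg (norm_nonneg _) _) _ hSsum
    intro i
    have he : ‖u i‖ ^ p = |f i x₀ - α i| ^ p := by
      rw [hu, Real.norm_eq_abs, abs_sub_comm]
    rw [he, hSdef]
    exact Finset.single_le_sum (f := fun x => |f i x - α i| ^ p) (fun x _ => Real.rpow_nonneg (abs_nonneg _) _)
      (Finset.mem_univ x₀)
  set w : lp (fun _ : ℕ => ℝ) (ENNReal.ofReal p) := F x₀ + ⟨u, humem⟩ with hw
  have hwcoord : ∀ x : V, ∀ i, (F x - w : lp _ (ENNReal.ofReal p)) i = f i x - α i := by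
    intro x i
    have he : (F x - w : lp _ (ENNReal.ofReal p)) i = F x i - (F x₀ i + u i) := rfl
    rw [he, hu, hf]
    ring
  have hxw : ∀ x : V, Summable (fun i => |f i x - α i| ^ p) := by
    intro x
    have h := (lp.memℓp (F x - w)).summable hptr
    rw [htop] at h
    exact h.congr fun i => by rw [hwcoord x i, Real.norm_eq_abs]
  have hnormw : ∀ x : V, ‖F x - w‖ ^ p = ∑' i, |f i x - α i| ^ p := by
    intro x
    have h := lp.norm_rpow_eq_tsum hptr (F x - w)
    rw [htop] at h
    rw [h]
    exact tsum_congr fun i => by rw [hwcoord x i, Real.norm_eq_abs]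
  have hsum1 : ∑ x : V, ‖F x - w‖ ^ p = ∑' i, S i := by
    calc ∑ x : V, ‖F x - w‖ ^ p = ∑ x : V, ∑' i, |f i x - α i| ^ p :=
          Finset.sum_congr rfl fun x _ => hnormw x
      _ = ∑' i, ∑ x : V, |f i x - α i| ^ p := (Summable.tsum_finsetSum fun x _ => hxw x).symm
  set N : ℕ → ℝ := fun i => ∑ x : V, ∑ y : V, |f i x - f i y| ^ p * (ω x y : ℝ) with hNdef
  have hNsum : Summable N :=
    summable_sum fun x _ => summable_sum fun y _ => (hFs x y).mul_right _
  have hNnonneg : ∀ i, 0 ≤ N i := fun i =>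
    Finset.sum_nonneg fun x _ => Finset.sum_nonneg fun y _ =>
      mul_nonneg (Real.rpow_nonneg (abs_nonneg _) _) (Nat.cast_nonneg _)
  have hkey : ∀ i, lambdaOne ω p * S i ≤ N i := by
    intro i
    by_cases hc : ∀ x y : V, f i x = f i y
    · have hS0 : S i = 0 := le_antisymm
        (le_trans (hα i (f i x₀)) (le_of_eq (Finset.sum_eq_zero fun x _ => by
          rw [hc x x₀, sub_self, abs_zero, Real.zero_rpow h0p.ne'])))
        (hSnonneg i)
      rw [hS0, mul_zero]
      exact hNnonneg i
    · have hDeq : (⨅ β : ℝ, ∑ x : V, |f i x - β| ^ p) = S i := by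
        apply le_antisymm
        · exact ciInf_le ⟨0, fun b ⟨β, hβ⟩ => hβ ▸ Finset.sum_nonneg fun x _ =>
            Real.rpow_nonneg (abs_nonneg _) _⟩ (α i)
        · exact le_ciInf (hα i)
      have hSpos : 0 < S i := by
        rcases (hSnonneg i).lt_or_eq with h | h
        · exact h
        · exfalso
          apply hc
          have hz := (Finset.sum_eq_zero_iff_of_nonneg (fun x _ =>
            Real.rpow_nonneg (abs_nonneg _) _)).mp h.symm
          have hcns : ∀ x : V, f i x = α i := by
            intro x
            have h1 := (Real.rpow_eq_zero (abs_nonneg _) h0p.ne').mp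
              (hz x (Finset.mem_univ x))
            rw [abs_eq_zero, sub_eq_zero] at h1
            exact h1
          intro x y
          rw [hcns x, hcns y]
      have hbdd : BddBelow {r : ℝ | ∃ g : V → ℝ, (¬ ∀ x y : V, g x = g y) ∧
          r = (∑ x : V, ∑ y : V, |g x - g y| ^ p * (ω x y : ℝ)) /
              (⨅ β : ℝ, ∑ x : V, |g x - β| ^ p)} := by
        refine ⟨0, ?_⟩
        rintro r ⟨g, hg, rfl⟩
        apply div_nonneg
        · exact Finset.sum_nonneg fun x _ => Finset.sum_nonneg fun y _ =>
            mul_nonneg (Real.rpow_nonneg (abs_nonneg _) _) (Nat.cast_nonneg _)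
        · exact Real.iInf_nonneg fun β => Finset.sum_nonneg fun x _ =>
            Real.rpow_nonneg (abs_nonneg _) _
      have hle : lambdaOne ω p ≤ N i / S i := by
        apply csInf_le hbdd
        exact ⟨f i, hc, by rw [hDeq]⟩
      calc lambdaOne ω p * S i ≤ (N i / S i) * S i :=
            mul_le_mul_of_nonneg_right hle hSpos.le
        _ = N i := div_mul_cancel₀ _ hSpos.ne'
  have hchain : lambdaOne ω p * ∑ x : V, ‖F x - w‖ ^ p ≤ ∑' i, N i := by
    rw [hsum1, ← tsum_mul_left]
    exact Summable.tsum_le_tsum hkey (hSsum.mul_left _) hNsum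
  have hNeq : ∑' i, N i = ∑ x : V, ∑ y : V, ‖F x - F y‖ ^ p * (ω x y : ℝ) := by
    calc ∑' i, N i = ∑ x : V, ∑' i, ∑ y : V, |f i x - f i y| ^ p * (ω x y : ℝ) :=
          Summable.tsum_finsetSum fun x _ => summable_sum fun y _ => (hFs x y).mul_right _
      _ = ∑ x : V, ∑ y : V, ∑' i, |f i x - f i y| ^ p * (ω x y : ℝ) :=
          Finset.sum_congr rfl fun x _ => Summable.tsum_finsetSum fun y _ => (hFs x y).mul_right _
      _ = ∑ x : V, ∑ y : V, ‖F x - F y‖ ^ p * (ω x y : ℝ) := by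
          refine Finset.sum_congr rfl fun x _ => Finset.sum_congr rfl fun y _ => ?_
          rw [tsum_mul_right]
          congr 1
          have h := lp.norm_rpow_eq_tsum hptr (F x - F y)
          rw [htop] at h
          rw [h]
          exact tsum_congr fun i => by rw [hsub x y i]
  refine ⟨w, hchain.trans ?_⟩
  rw [hNeq]
  calc ∑ x : V, ∑ y : V, ‖F x - F y‖ ^ p * (ω x y : ℝ)
      ≤ ∑ x : V, ∑ y : V, (ω x y : ℝ) := by
        refine Finset.sum_le_sum fun x _ => Finset.sum_le_sum fun y _ => ?_
        rcases Nat.eq_zero_or_pos (ω x y) with h0 | h1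
        · simp [h0]
        rcases eq_or_ne x y with rfl | hxy
        · rw [sub_self]
          simp [Real.zero_rpow h0p.ne']
        · have hadj : (multGraph ω).Adj x y := ⟨hxy, h1, by rw [← hsymm x y]; exact h1⟩
          have hd : multDist ω x y = 1 := by
            rw [multDist, SimpleGraph.dist_eq_one_iff_adj.mpr hadj]
            norm_num
          have h1' : ‖F x - F y‖ ≤ 1 := by rw [← hd]; exact hlip x y
          have hr : ‖F x - F y‖ ^ p ≤ 1 := Real.rpow_le_one (norm_nonneg _) h1' h0p.le
          calc ‖F x - F y‖ ^ p * (ω x y : ℝ) ≤ 1 * (ω x y : ℝ) :=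
                mul_le_mul_of_nonneg_right hr (Nat.cast_nonneg _)
            _ = (ω x y : ℝ) := one_mul _
    _ ≤ ∑ _x : V, (k : ℝ) := Finset.sum_le_sum fun x _ => by
          rw [← Nat.cast_sum]
          exact_mod_cast hdeg x
    _ = (k : ℝ) * (Fintype.card V : ℝ) := by
          rw [Finset.sum_const, nsmul_eq_mul, Finset.card_univ, mul_comm]
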